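/- Let G be a tree with at least two vertices and let S ⊆ V be an independent set (no two vertices of S are adjacent in G). Then S is a minimal perfect critical set of G if and only if |S| = 2 and every vertex v ∉ S satisfies N_S(v) = ∅ or N_S(v) = S (i.e., the two vertices of S are twins). -/

import Mathlib

open Matrix
open scoped Classical

/-- `S` is a critical set of `G`: `S` is nonempty and there is a nonzero eigenvector of the
Laplacian of `G` vanishing outside `S`. -/
def IsCriticalSet {V : Type*} [Fintype V] [DecidableEq V] (G : SimpleGraph V) (S : Set V) :
    Prop :=
  S.Nonempty ∧ ∃ (lam : ℝ) (y : V → ℝ), y ≠ 0 ∧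
    G.lapMatrix ℝ *ᵥ y = lam • y ∧ ∀ v ∉ S, y v = 0

/-- `S` is a perfect critical set of `G`: some inducing eigenvector vanishes outside `S` and is
nonzero at every vertex of `S`. -/
def IsPerfectCriticalSet {V : Type*} [Fintype V] [DecidableEq V] (G : SimpleGraph V)
    (S : Set V) : Prop :=
  S.Nonempty ∧ ∃ (lam : ℝ) (y : V → ℝ), y ≠ 0 ∧
    G.lapMatrix ℝ *ᵥ y = lam • y ∧ (∀ v ∉ S, y v = 0) ∧ ∀ v ∈ S, y v ≠ 0

/-- `S` is a minimal perfect critical set of `G`: a perfect critical set none of whose proper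
subsets is a perfect critical set. -/
def IsMinimalPerfectCriticalSet {V : Type*} [Fintype V] [DecidableEq V] (G : SimpleGraph V)
    (S : Set V) : Prop :=
  IsPerfectCriticalSet G S ∧ ∀ T : Set V, T ⊂ S → ¬ IsPerfectCriticalSet G T

section Aux

open Finset

set_option linter.unusedSectionVars false

variable {V : Type*} [Fintype V] [DecidableEq V] {G : SimpleGraph V}

private lemma exists_adj' (hc : G.Connected) (hcard : 2 ≤ Fintype.card V) (v : V) :
    ∃ u, G.Adj v u := by
  obtain ⟨u, hu⟩ := Fintype.exists_ne_of_one_lt_card (by omega) v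
  obtain ⟨w⟩ := hc.preconnected v u
  cases w with
  | nil => exact absurd rfl hu
  | cons h p => exact ⟨_, h⟩

private lemma isPath_concat' {u v w : V} {p : G.Walk u v} (hp : p.IsPath) (h : G.Adj v w)
    (hw : w ∉ p.support) : (p.concat h).IsPath := by
  rw [← SimpleGraph.Walk.isPath_reverse_iff, SimpleGraph.Walk.reverse_concat]
  exact hp.reverse.cons (by simpa [SimpleGraph.Walk.support_reverse] using hw)

private lemma exists_path_length_dist (hc : G.Connected) (r v : V) :
    ∃ p : G.Walk r v, p.IsPath ∧ p.length = G.dist r v := by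
  obtain ⟨w, hw⟩ := hc.exists_walk_length_eq_dist r v
  refine ⟨w.bypass, w.bypass_isPath, le_antisymm ?_ ?_⟩
  · exact hw ▸ w.length_bypass_le
  · exact G.dist_le _

private lemma dist_ne_of_adj (hG : G.IsTree) (r : V) {u v : V} (h : G.Adj u v) :
    G.dist r u ≠ G.dist r v := by
  intro heq
  obtain ⟨p, hp, hpl⟩ := exists_path_length_dist hG.isConnected r u
  by_cases hv : v ∈ p.support
  · have h1 : G.dist r v ≤ (p.takeUntil v hv).length := G.dist_le _
    have h2 : (p.takeUntil v hv).length ≤ p.length := SimpleGraph.Walk.length_takeUntil_le p hv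
    have h3 : (p.takeUntil v hv).length ≠ p.length := by
      intro hl
      have hs := SimpleGraph.Walk.take_spec p hv
      have := congrArg SimpleGraph.Walk.length hs
      rw [SimpleGraph.Walk.length_append, hl] at this
      have h0 : (p.dropUntil v hv).length = 0 := by omega
      exact h.ne' (SimpleGraph.Walk.eq_of_length_eq_zero (p := p.dropUntil v hv) h0)
    omega
  · have hq : (p.concat h).IsPath := isPath_concat' hp h hv
    obtain ⟨p2, hp2, hp2l⟩ := exists_path_length_dist hG.isConnected r v
    have := (hG.existsUnique_path r v).unique hq hp2
    have := congrArg SimpleGraph.Walk.length this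
    rw [SimpleGraph.Walk.length_concat] at this
    omega

private lemma parent_eq (hG : G.IsTree) (r : V) {v p₁ p₂ : V} (h1 : G.Adj p₁ v)
    (h2 : G.Adj p₂ v) (d1 : G.dist r p₁ < G.dist r v) (d2 : G.dist r p₂ < G.dist r v) :
    p₁ = p₂ := by
  have key : ∀ {p : V} (h : G.Adj p v), G.dist r p < G.dist r v →
      ∃ (q : G.Walk r v), q.IsPath ∧ q.reverse.getVert 1 = p := by
    intro p h hd
    obtain ⟨P, hP, hPl⟩ := exists_path_length_dist hG.isConnected r p
    have hv : v ∉ P.support := by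
      intro hv
      have h1 : G.dist r v ≤ (P.takeUntil v hv).length := G.dist_le _
      have h2 : (P.takeUntil v hv).length ≤ P.length :=
        SimpleGraph.Walk.length_takeUntil_le P hv
      omega
    refine ⟨P.concat h, isPath_concat' hP h hv, ?_⟩
    rw [SimpleGraph.Walk.reverse_concat]
    show (P.reverse).getVert 0 = p
    exact P.reverse.getVert_zero
  obtain ⟨q1, hq1, he1⟩ := key h1 d1
  obtain ⟨q2, hq2, he2⟩ := key h2 d2
  have : q1 = q2 := (hG.existsUnique_path r v).unique hq1 hq2
  rw [← he1, ← he2, this]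

/-- tree edge bound: #(edges from outside `S` into `S`) + 1 ≤ #C + #S. -/
private lemma tree_count (hG : G.IsTree) (S : Set V) {r : V} (hr : r ∈ S) :
    (univ.filter (fun p : V × V => p.1 ∉ S ∧ p.2 ∈ S ∧ G.Adj p.1 p.2)).card + 1
      ≤ (univ.filter (fun v => v ∉ S ∧ ∃ u ∈ S, G.Adj v u)).card + S.toFinset.card := by
  set F := univ.filter (fun p : V × V => p.1 ∉ S ∧ p.2 ∈ S ∧ G.Adj p.1 p.2) with hF
  set Cf := univ.filter (fun v : V => v ∉ S ∧ ∃ u ∈ S, G.Adj v u) with hCf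
  set f : V × V → V := fun p => if G.dist r p.1 < G.dist r p.2 then p.2 else p.1 with hf
  have key : ∀ p ∈ F, ∃ o : V, G.Adj o (f p) ∧ G.dist r o < G.dist r (f p) ∧
      ((p = (o, f p) ∧ f p ∈ S) ∨ (p = (f p, o) ∧ f p ∉ S)) := by
    intro p hp
    rw [hF, mem_filter] at hp
    obtain ⟨-, h1, h2, h3⟩ := hp
    by_cases hlt : G.dist r p.1 < G.dist r p.2
    · have hfp : f p = p.2 := if_pos hlt
      exact ⟨p.1, hfp ▸ h3, hfp ▸ hlt, Or.inl ⟨by simp [hfp], hfp ▸ h2⟩⟩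
    · have hne := dist_ne_of_adj hG r h3
      have hlt2 : G.dist r p.2 < G.dist r p.1 := by omega
      have hfp : f p = p.1 := if_neg hlt
      exact ⟨p.2, hfp ▸ h3.symm, hfp ▸ hlt2, Or.inr ⟨by simp [hfp], hfp ▸ h1⟩⟩
  have hmaps : ∀ p ∈ F, f p ∈ (Cf ∪ S.toFinset).erase r := by
    intro p hp
    obtain ⟨o, ho1, ho2, ho3⟩ := key p hp
    rw [mem_erase]
    constructor
    · intro hfr
      rw [hfr] at ho2
      simp [SimpleGraph.dist_self] at ho2
    · rw [hF, mem_filter] at hp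
      obtain ⟨-, h1, h2, h3⟩ := hp
      rcases ho3 with ⟨hpe, hfS⟩ | ⟨hpe, hfS⟩
      · exact mem_union_right _ (Set.mem_toFinset.2 hfS)
      · refine mem_union_left _ ?_
        rw [hCf, mem_filter]
        refine ⟨mem_univ _, hfS, o, ?_, ho1.symm⟩
        have : o = p.2 := by rw [hpe]
        exact this ▸ h2
  have hinj : ∀ p ∈ F, ∀ q ∈ F, f p = f q → p = q := by
    intro p hp q hq hfeq
    obtain ⟨o1, a1, b1, c1⟩ := key p hp
    obtain ⟨o2, a2, b2, c2⟩ := key q hq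
    rw [hfeq] at a1 b1
    have ho : o1 = o2 := parent_eq hG r a1 a2 b1 b2
    rcases c1 with ⟨e1, s1⟩ | ⟨e1, s1⟩ <;> rcases c2 with ⟨e2, s2⟩ | ⟨e2, s2⟩
    · rw [e1, e2, ho, hfeq]
    · exact absurd (hfeq ▸ s1) s2
    · exact absurd (hfeq ▸ s2) s1
    · rw [e1, e2, ho, hfeq]
  have hcard : F.card ≤ ((Cf ∪ S.toFinset).erase r).card :=
    Finset.card_le_card_of_injOn f hmaps hinj
  have hrmem : r ∈ Cf ∪ S.toFinset := mem_union_right _ (Set.mem_toFinset.2 hr)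
  have h1 : ((Cf ∪ S.toFinset).erase r).card + 1 = (Cf ∪ S.toFinset).card :=
    Finset.card_erase_add_one hrmem
  have h2 : (Cf ∪ S.toFinset).card ≤ Cf.card + S.toFinset.card := Finset.card_union_le _ _
  omega

/-- more unknowns than equations: nontrivial solution vanishing at `s0`. -/
private lemma exists_small_solution (S : Set V) {s0 : V} (hs0 : s0 ∈ S)
    (Cf : Finset V) (hlt : Cf.card + 1 < S.toFinset.card) :
    ∃ z : V → ℝ, z ≠ 0 ∧ (∀ v ∉ S, z v = 0) ∧ z s0 = 0 ∧
      ∀ c ∈ Cf, ∑ u ∈ S.toFinset.filter (fun u => G.Adj c u), z u = 0 := by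
  set Sf := S.toFinset with hSf
  have hs0' : s0 ∈ Sf := Set.mem_toFinset.2 hs0
  set M : Matrix ↥Cf ↥Sf ℝ := fun c u => if G.Adj c u then 1 else 0 with hM
  set φ : (↥Sf → ℝ) →ₗ[ℝ] (↥Cf → ℝ) × ℝ :=
    LinearMap.prod M.mulVecLin (LinearMap.proj (⟨s0, hs0'⟩ : ↥Sf)) with hφ
  have hnotinj : ¬ Function.Injective φ := by
    intro hinj
    have := LinearMap.finrank_le_finrank_of_injective hinj
    rw [Module.finrank_prod, Module.finrank_pi, Module.finrank_pi, Module.finrank_self] at this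
    simp only [Fintype.card_coe] at this
    omega
  rw [← LinearMap.ker_eq_bot] at hnotinj
  obtain ⟨z', hz'mem, hz'ne⟩ := Submodule.exists_mem_ne_zero_of_ne_bot hnotinj
  rw [LinearMap.mem_ker] at hz'mem
  have hz1 : M.mulVecLin z' = 0 := congrArg Prod.fst hz'mem
  have hz2 : z' ⟨s0, hs0'⟩ = 0 := congrArg Prod.snd hz'mem
  refine ⟨fun v => if h : v ∈ Sf then z' ⟨v, h⟩ else 0, ?_, ?_, ?_, ?_⟩
  · intro h0
    apply hz'ne
    ext u
    have := congrFun h0 u.1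
    simpa [u.2] using this
  · intro v hv
    have : v ∉ Sf := fun h => hv (Set.mem_toFinset.1 h)
    simp [this]
  · simp [hs0', hz2]
  · intro c hc
    have := congrFun hz1 ⟨c, hc⟩
    rw [Matrix.mulVecLin_apply, Matrix.mulVec, dotProduct] at this
    simp only [Pi.zero_apply] at this
    rw [Finset.sum_filter]
    rw [← Finset.sum_attach Sf fun u =>
      if G.Adj c u then (if h : u ∈ Sf then z' ⟨u, h⟩ else 0) else 0]
    refine Eq.trans (Finset.sum_congr rfl ?_) this
    intro u _
    simp [hM, u.2, ite_mul]

private lemma singleton_not_pcs (hc : G.Connected) (hcard : 2 ≤ Fintype.card V) (a : V) :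
    ¬ IsPerfectCriticalSet G {a} := by
  rintro ⟨-, lam, y, hy0, hL, hout, hin⟩
  obtain ⟨u, hu⟩ := exists_adj' hc hcard a
  have hune : u ≠ a := fun h => G.irrefl (h ▸ hu)
  have hyu : y u = 0 := hout u (by simp [hune])
  have hrow := congrFun hL u
  rw [SimpleGraph.lapMatrix_mulVec_apply, Pi.smul_apply, smul_eq_mul, hyu, mul_zero,
    mul_zero, zero_sub, neg_eq_zero] at hrow
  have hsum : ∑ w ∈ G.neighborFinset u, y w = y a := by
    refine Finset.sum_eq_single_of_mem a (by simp [SimpleGraph.mem_neighborFinset, hu.symm]) ?_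
    intro b _ hb
    exact hout b (by simp [hb])
  exact hin a rfl (hsum ▸ hrow)

private lemma count_snd (S : Set V) (hind : ∀ u ∈ S, ∀ w ∈ S, ¬ G.Adj u w) :
    (univ.filter (fun p : V × V => p.1 ∉ S ∧ p.2 ∈ S ∧ G.Adj p.1 p.2)).card
      = ∑ s ∈ S.toFinset, G.degree s := by
  rw [Finset.card_eq_sum_card_fiberwise
    (f := Prod.snd) (t := S.toFinset) (fun p hp => by
      rw [mem_coe, mem_filter] at hp; exact Set.mem_toFinset.2 hp.2.2.1)]
  refine Finset.sum_congr rfl fun s hs => ?_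
  rw [← SimpleGraph.card_neighborFinset_eq_degree]
  apply Finset.card_bij (fun p _ => p.1)
  · intro p hp
    simp only [mem_filter, mem_univ, true_and] at hp
    rw [SimpleGraph.mem_neighborFinset]
    exact (hp.2 ▸ hp.1.2.2).symm
  · intro p hp q hq h
    simp only [mem_filter] at hp hq
    exact Prod.ext h (hp.2.trans hq.2.symm)
  · intro u hu
    rw [SimpleGraph.mem_neighborFinset] at hu
    have hs' : s ∈ S := Set.mem_toFinset.1 hs
    have huS : u ∉ S := fun h => hind s hs' u h hu
    exact ⟨(u, s), by simp [huS, hs', hu.symm], rfl⟩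

private lemma count_fst (S : Set V) :
    (univ.filter (fun p : V × V => p.1 ∉ S ∧ p.2 ∈ S ∧ G.Adj p.1 p.2)).card
      = ∑ v ∈ univ.filter (fun v : V => v ∉ S ∧ ∃ u ∈ S, G.Adj v u),
          (S.toFinset.filter (fun u => G.Adj v u)).card := by
  rw [Finset.card_eq_sum_card_fiberwise
    (f := Prod.fst) (t := univ.filter (fun v : V => v ∉ S ∧ ∃ u ∈ S, G.Adj v u))
    (fun p hp => by
      rw [mem_coe, mem_filter] at hp
      exact mem_filter.2 ⟨mem_univ _, hp.2.1, p.2, hp.2.2.1, hp.2.2.2⟩)]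
  refine Finset.sum_congr rfl fun v hv => ?_
  apply Finset.card_bij (fun p _ => p.2)
  · intro p hp
    simp only [mem_filter, mem_univ, true_and] at hp
    exact mem_filter.2 ⟨Set.mem_toFinset.2 hp.1.2.1, hp.2 ▸ hp.1.2.2⟩
  · intro p hp q hq h
    simp only [mem_filter] at hp hq
    exact Prod.ext (hp.2.trans hq.2.symm) h
  · intro u hu
    rw [mem_filter] at hu hv
    exact ⟨(v, u), by simp [hv.2.1, Set.mem_toFinset.1 hu.1, hu.2], rfl⟩

end Aux

set_option linter.unusedTactic false
set_option linter.unreachableTactic false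
set_option maxHeartbeats 1000000

open Finset in
/-- For a tree, an independent set `S` is a minimal perfect critical set if and only if
`|S| = 2` and every vertex outside `S` is adjacent either to no vertex of `S` or to every
vertex of `S` (the two vertices of `S` are twins). -/
theorem independent_mpcs_iff_twins {V : Type*} [Fintype V] [DecidableEq V]
    (G : SimpleGraph V) (hG : G.IsTree) (hcard : 2 ≤ Fintype.card V)
    (S : Set V) (hind : ∀ u ∈ S, ∀ w ∈ S, ¬ G.Adj u w) :
    IsMinimalPerfectCriticalSet G S ↔
      S.ncard = 2 ∧ ∀ v ∉ S, (∀ u ∈ S, ¬ G.Adj v u) ∨ (∀ u ∈ S, G.Adj v u) := by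
  constructor
  · intro h
    have hconn := hG.isConnected
    obtain ⟨⟨hSne, lam, y, hy0, hL, hyout, hyin⟩, hmin⟩ := h
    obtain ⟨s0, hs0⟩ := hSne
    set Sf := S.toFinset with hSf
    set Cf := univ.filter (fun v : V => v ∉ S ∧ ∃ u ∈ S, G.Adj v u) with hCf
    -- rows of the eigenvalue equation
    have hrow : ∀ v, (G.degree v : ℝ) * y v - ∑ u ∈ G.neighborFinset v, y u = lam * y v := by
      intro v
      have := congrFun hL v
      rwa [SimpleGraph.lapMatrix_mulVec_apply, Pi.smul_apply, smul_eq_mul] at this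
    -- all vertices of S have degree lam
    have hdeg : ∀ s ∈ S, (G.degree s : ℝ) = lam := by
      intro s hs
      have hz : ∀ u ∈ G.neighborFinset s, y u = 0 := by
        intro u hu
        rw [SimpleGraph.mem_neighborFinset] at hu
        exact hyout u (fun huS => hind s hs u huS hu)
      have h1 := hrow s
      rw [Finset.sum_eq_zero hz, sub_zero] at h1
      exact mul_right_cancel₀ (hyin s hs) h1
    -- constraints at vertices outside S
    have hsum : ∀ v ∉ S, ∑ u ∈ Sf.filter (fun u => G.Adj v u), y u = 0 := by
      intro v hv
      have h1 := hrow v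
      rw [hyout v hv, mul_zero, mul_zero, zero_sub, neg_eq_zero] at h1
      have hss : Sf.filter (fun u => G.Adj v u) ⊆ G.neighborFinset v := by
        intro u hu
        rw [mem_filter] at hu
        rw [SimpleGraph.mem_neighborFinset]
        exact hu.2
      refine (Finset.sum_subset hss ?_).trans h1
      intro u hu hnu
      refine hyout u (fun huS => hnu (mem_filter.2 ⟨Set.mem_toFinset.2 huS, ?_⟩))
      rwa [SimpleGraph.mem_neighborFinset] at hu
    -- each constraint vertex has ≥ 2 neighbours in S
    have htwo : ∀ v ∈ Cf, 2 ≤ (Sf.filter (fun u => G.Adj v u)).card := by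
      intro v hv
      rw [hCf, mem_filter] at hv
      obtain ⟨-, hvS, u, huS, hadj⟩ := hv
      have hne : (Sf.filter (fun u => G.Adj v u)).Nonempty :=
        ⟨u, mem_filter.2 ⟨Set.mem_toFinset.2 huS, hadj⟩⟩
      rcases Nat.lt_or_ge (Sf.filter (fun u => G.Adj v u)).card 2 with hlt | hge
      · exfalso
        have hpos := Finset.card_pos.2 hne
        have hc1 : (Sf.filter (fun u => G.Adj v u)).card = 1 := by omega
        obtain ⟨w, hw⟩ := Finset.card_eq_one.1 hc1
        have hsum' := hsum v hvS
        rw [hw, Finset.sum_singleton] at hsum'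
        have hwmem : w ∈ Sf.filter (fun u => G.Adj v u) := hw ▸ Finset.mem_singleton_self w
        exact hyin w (Set.mem_toFinset.1 (mem_filter.1 hwmem).1) hsum'
      · exact hge
    have hk1 : 1 ≤ Sf.card := Finset.card_pos.2 ⟨s0, Set.mem_toFinset.2 hs0⟩
    -- S is not a singleton
    have hkne1 : Sf.card ≠ 1 := by
      intro h1
      obtain ⟨u, hu⟩ := exists_adj' hconn hcard s0
      have huS : u ∉ S := fun huS => hind s0 hs0 u huS hu
      have hu' : u ∈ Cf := mem_filter.2 ⟨mem_univ _, huS, s0, hs0, hu.symm⟩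
      have h2 := htwo u hu'
      have h3 : (Sf.filter (fun w => G.Adj u w)).card ≤ Sf.card := Finset.card_filter_le _ _
      omega
    -- minimality forces few unknowns
    have hCk : Sf.card ≤ Cf.card + 1 := by
      by_contra hgt
      push_neg at hgt
      obtain ⟨z, hz0, hzout, hzs0, hzc⟩ := exists_small_solution S hs0 Cf (by rw [← hSf]; omega)
      set T : Set V := {v | z v ≠ 0} with hT
      have hTsub : T ⊆ S := fun v hv => by_contra fun hnS => hv (hzout v hnS)
      have hzrow : ∀ v, (G.degree v : ℝ) * z v - ∑ u ∈ G.neighborFinset v, z u = lam * z v := by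
        intro v
        by_cases hv : v ∈ S
        · have hz : ∀ u ∈ G.neighborFinset v, z u = 0 := by
            intro u hu
            rw [SimpleGraph.mem_neighborFinset] at hu
            exact hzout u (fun huS => hind v hv u huS hu)
          rw [Finset.sum_eq_zero hz, sub_zero, hdeg v hv]
        · rw [hzout v hv, mul_zero, mul_zero, zero_sub, neg_eq_zero]
          have hss : Sf.filter (fun u => G.Adj v u) ⊆ G.neighborFinset v := by
            intro u hu
            rw [mem_filter] at hu
            rw [SimpleGraph.mem_neighborFinset]
            exact hu.2
          have hext : ∑ u ∈ G.neighborFinset v, z u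
              = ∑ u ∈ Sf.filter (fun u => G.Adj v u), z u := by
            refine (Finset.sum_subset hss ?_).symm
            intro u hu hnu
            refine hzout u (fun huS => hnu (mem_filter.2 ⟨Set.mem_toFinset.2 huS, ?_⟩))
            rwa [SimpleGraph.mem_neighborFinset] at hu
          rw [hext]
          by_cases hvC : v ∈ Cf
          · exact hzc v hvC
          · have hemp : Sf.filter (fun u => G.Adj v u) = ∅ := by
              rw [Finset.filter_eq_empty_iff]
              intro u hu hadj
              exact hvC (mem_filter.2 ⟨mem_univ _, hv, u, Set.mem_toFinset.1 hu, hadj⟩)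
            rw [hemp, Finset.sum_empty]
      have hTpcs : IsPerfectCriticalSet G T := by
        refine ⟨?_, lam, z, hz0, ?_, ?_, fun v hv => hv⟩
        · obtain ⟨v, hv⟩ := Function.ne_iff.1 hz0
          exact ⟨v, by simpa [hT] using hv⟩
        · funext v
          rw [SimpleGraph.lapMatrix_mulVec_apply, Pi.smul_apply, smul_eq_mul]
          exact hzrow v
        · intro v hv
          exact not_not.1 hv
      refine hmin T ?_ hTpcs
      refine hTsub.ssubset_of_ne ?_
      intro hTS
      have : s0 ∈ T := hTS ▸ hs0
      exact this hzs0
    -- counting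
    have htree := tree_count hG S hs0
    have hfst := count_fst (G := G) S
    have hsnd := count_snd (G := G) S hind
    set F := univ.filter (fun p : V × V => p.1 ∉ S ∧ p.2 ∈ S ∧ G.Adj p.1 p.2) with hFdef
    have hge2 : 2 * Cf.card ≤ F.card := by
      rw [hfst]
      calc 2 * Cf.card = ∑ _v ∈ Cf, 2 := by rw [Finset.sum_const, smul_eq_mul, mul_comm]
      _ ≤ _ := Finset.sum_le_sum htwo
    have hdconst : ∀ s ∈ S, G.degree s = G.degree s0 := by
      intro s hs
      have : ((G.degree s : ℝ)) = (G.degree s0 : ℝ) := (hdeg s hs).trans (hdeg s0 hs0).symm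
      exact_mod_cast this
    have hD : F.card = Sf.card * G.degree s0 := by
      rw [hsnd, Finset.sum_congr rfl (fun s hs => hdconst s (Set.mem_toFinset.1 hs)),
        Finset.sum_const, smul_eq_mul]
    have hd1 : 1 ≤ G.degree s0 := by
      obtain ⟨u, hu⟩ := exists_adj' hconn hcard s0
      have : u ∈ G.neighborFinset s0 := (SimpleGraph.mem_neighborFinset _ _ _).2 hu
      have := Finset.card_pos.2 ⟨u, this⟩
      rwa [SimpleGraph.card_neighborFinset_eq_degree] at this
    -- arithmetic
    have hk2 : Sf.card = 2 ∧ Cf.card = 1 := by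
      set k := Sf.card
      set c := Cf.card
      set d := G.degree s0
      set m := F.card
      -- m + 1 ≤ c + k, 2c ≤ m, k ≤ c + 1, m = k * d, 1 ≤ d, 1 ≤ k, k ≠ 1
      rcases Nat.lt_or_ge d 2 with hd2 | hd2
      · have hdeq : d = 1 := by omega
        have hmk : m = k := by rw [hD, hdeq, mul_one]
        omega
      · exfalso
        have h2k : 2 * k ≤ m := by
          rw [hD, mul_comm]
          exact Nat.mul_le_mul_left k hd2
        omega
    refine ⟨?_, ?_⟩
    · rw [Set.ncard_eq_toFinset_card']
      exact hk2.1
    · intro v hv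
      by_cases hadj : ∃ u ∈ S, G.Adj v u
      · right
        have hvC : v ∈ Cf := mem_filter.2 ⟨mem_univ _, hv, hadj⟩
        have h2 := htwo v hvC
        have hsub : Sf.filter (fun u => G.Adj v u) ⊆ Sf := Finset.filter_subset _ _
        have heq : Sf.filter (fun u => G.Adj v u) = Sf :=
          Finset.eq_of_subset_of_card_le hsub (by omega)
        intro u huS
        have hmem : u ∈ Sf.filter (fun u => G.Adj v u) := by
          rw [heq]
          exact Set.mem_toFinset.2 huS
        exact (mem_filter.1 hmem).2
      · left
        push_neg at hadj
        exact hadj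
  · rintro ⟨hS2, htwin⟩
    have hconn := hG.isConnected
    obtain ⟨a, b, hab, rfl⟩ := Set.ncard_eq_two.1 hS2
    have hnadj : ¬ G.Adj a b := hind a (by simp) b (by simp)
    have hsame : ∀ v, G.Adj v a ↔ G.Adj v b := by
      intro v
      by_cases hv : v ∈ ({a, b} : Set V)
      · simp only [Set.mem_insert_iff, Set.mem_singleton_iff] at hv
        rcases hv with rfl | rfl
        · simp [G.irrefl, hnadj]
        · constructor
          · intro h; exact absurd h.symm hnadj
          · intro h; exact absurd h (G.irrefl)
      · rcases htwin v hv with h | h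
        · simp [h a (by simp), h b (by simp)]
        · simp [h a (by simp), h b (by simp)]
    have hdeg : G.degree b = G.degree a := by
      rw [← SimpleGraph.card_neighborFinset_eq_degree, ← SimpleGraph.card_neighborFinset_eq_degree]
      congr 1
      ext u
      simp only [SimpleGraph.mem_neighborFinset]
      constructor
      · intro h
        exact ((hsame u).2 h.symm).symm
      · intro h
        exact ((hsame u).1 h.symm).symm
    set y : V → ℝ := fun v => (if v = a then 1 else 0) + (if v = b then -1 else 0) with hy
    have hya : y a = 1 := by simp [hy, hab]
    have hyb : y b = -1 := by simp [hy, Ne.symm hab]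
    have hyout : ∀ v, v ∉ ({a, b} : Set V) → y v = 0 := by
      intro v hv
      simp only [Set.mem_insert_iff, Set.mem_singleton_iff, not_or] at hv
      simp [hy, hv.1, hv.2]
    constructor
    · refine ⟨⟨a, by simp⟩, (G.degree a : ℝ), y, ?_, ?_, hyout, ?_⟩
      · intro h
        have := congrFun h a
        rw [hya] at this
        norm_num at this
      · funext v
        rw [SimpleGraph.lapMatrix_mulVec_apply, Pi.smul_apply, smul_eq_mul]
        have hsumv : ∑ u ∈ G.neighborFinset v, y u
            = (if a ∈ G.neighborFinset v then (1 : ℝ) else 0)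
              + (if b ∈ G.neighborFinset v then (-1 : ℝ) else 0) := by
          rw [hy]
          rw [Finset.sum_add_distrib]
          rw [Finset.sum_ite_eq' (G.neighborFinset v) a (fun _ => (1 : ℝ)),
            Finset.sum_ite_eq' (G.neighborFinset v) b (fun _ => (-1 : ℝ))]
        by_cases hva : v = a
        · have h1 : a ∉ G.neighborFinset v := by
            rw [SimpleGraph.mem_neighborFinset, hva]; exact G.irrefl
          have h2 : b ∉ G.neighborFinset v := by
            rw [SimpleGraph.mem_neighborFinset, hva]; exact hnadj
          rw [hsumv, if_neg h1, if_neg h2, hva, hya]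
          ring
        · by_cases hvb : v = b
          · have h1 : a ∉ G.neighborFinset v := by
              rw [SimpleGraph.mem_neighborFinset, hvb]; intro h; exact hnadj h.symm
            have h2 : b ∉ G.neighborFinset v := by
              rw [SimpleGraph.mem_neighborFinset, hvb]; exact G.irrefl
            rw [hsumv, if_neg h1, if_neg h2, hvb, hyb, hdeg]
            ring
          · have hv0 : y v = 0 := hyout v (by simp [hva, hvb])
            simp only [SimpleGraph.mem_neighborFinset] at hsumv
            rw [hsumv, hv0]
            by_cases hadj : G.Adj v a
            · rw [if_pos hadj, if_pos ((hsame v).1 hadj)]; ring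
            · rw [if_neg hadj, if_neg (fun h => hadj ((hsame v).2 h))]; ring
      · intro v hv
        simp only [Set.mem_insert_iff, Set.mem_singleton_iff] at hv
        rcases hv with rfl | rfl
        · rw [hya]; norm_num
        · rw [hyb]; norm_num
    · intro T hT hTpcs
      obtain ⟨⟨t, ht⟩, -⟩ := id hTpcs
      have hTsub : T ⊆ {a, b} := hT.subset
      have hTne : T ≠ {a, b} := hT.ne
      have hTeq : T = {t} := by
        ext x
        simp only [Set.mem_singleton_iff]
        refine ⟨fun hx => ?_, fun h => h ▸ ht⟩
        by_contra hne
        have hxab := hTsub hx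
        have htab := hTsub ht
        simp only [Set.mem_insert_iff, Set.mem_singleton_iff] at hxab htab
        apply hTne
        apply Set.Subset.antisymm hTsub
        intro w hw
        simp only [Set.mem_insert_iff, Set.mem_singleton_iff] at hw
        rcases hxab with rfl | rfl <;> rcases htab with rfl | rfl <;>
          rcases hw with rfl | rfl <;> (first
            | exact hx
            | exact ht
            | exact absurd rfl hne
            | exact absurd rfl hab
            | exact absurd rfl (Ne.symm hab))
      exact singleton_not_pcs hconn hcard t (hTeq ▸ hTpcs)
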